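/- In the polynomial ring ℂ[z₁,z₂,z₃,z₄], let I⁺ = ⟨z₄², z₂z₃ + z₁z₄, z₂² + z₂z₄⟩ and g = z₂². Then g ∉ I⁺, and z_j·g ∈ I⁺ for every j ∈ {1,2,3,4}; equivalently, g belongs to the colon ideal I⁺ : ⟨z₁,z₂,z₃,z₄⟩ but not to I⁺. -/

import Mathlib

open MvPolynomial TrivSqZeroExt

set_option synthInstance.maxHeartbeats 1000000
set_option maxHeartbeats 2000000

noncomputable abbrev Rr := DualNumber (DualNumber ℂ)

noncomputable def xx : Rr := inl DualNumber.eps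
noncomputable def yy : Rr := DualNumber.eps

noncomputable def vv : Fin 4 → Rr := ![0, yy - (algebraMap ℂ Rr (1/2)) * xx, 0, xx]

lemma xx_sq : xx * xx = 0 := by
  simp [xx, ← inl_mul, DualNumber.eps_mul_eps]

lemma yy_sq : yy * yy = 0 := by simp [yy, DualNumber.eps_mul_eps]

lemma xy_ne : xx * yy ≠ 0 := by
  intro h
  have := congrArg TrivSqZeroExt.snd h
  simp [xx, yy] at this
  simpa using congrArg TrivSqZeroExt.snd this

theorem explicit_example_colon_membership :
    (X 1 ^ 2 : MvPolynomial (Fin 4) ℂ) ∉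
      Ideal.span {X 3 ^ 2, X 1 * X 2 + X 0 * X 3, X 1 ^ 2 + X 1 * X 3} ∧
    (∀ j : Fin 4, (X j * X 1 ^ 2 : MvPolynomial (Fin 4) ℂ) ∈
      Ideal.span {X 3 ^ 2, X 1 * X 2 + X 0 * X 3, X 1 ^ 2 + X 1 * X 3}) ∧
    (X 1 ^ 2 : MvPolynomial (Fin 4) ℂ) ∈
      Submodule.colon
        (Ideal.span {X 3 ^ 2, X 1 * X 2 + X 0 * X 3, X 1 ^ 2 + X 1 * X 3})
        (Ideal.span (Set.range (X : Fin 4 → MvPolynomial (Fin 4) ℂ))) := by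
  set f1 : MvPolynomial (Fin 4) ℂ := X 3 ^ 2 with hf1
  set f2 : MvPolynomial (Fin 4) ℂ := X 1 * X 2 + X 0 * X 3 with hf2
  set f3 : MvPolynomial (Fin 4) ℂ := X 1 ^ 2 + X 1 * X 3 with hf3
  set I : Ideal (MvPolynomial (Fin 4) ℂ) := Ideal.span {f1, f2, f3} with hI
  have m1 : f1 ∈ I := Ideal.subset_span (by simp)
  have m2 : f2 ∈ I := Ideal.subset_span (by simp)
  have m3 : f3 ∈ I := Ideal.subset_span (by simp)
  have k0 : (X 0 * X 1 ^ 2 : MvPolynomial (Fin 4) ℂ) ∈ I := by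
    have e : (X 0 * X 1 ^ 2 : MvPolynomial (Fin 4) ℂ)
        = X 0 * f3 - X 1 * f2 + X 2 * f3 - X 3 * f2 + X 0 * f1 := by
      rw [hf1, hf2, hf3]; ring
    rw [e]
    exact add_mem (sub_mem (add_mem (sub_mem (I.mul_mem_left _ m3)
      (I.mul_mem_left _ m2)) (I.mul_mem_left _ m3)) (I.mul_mem_left _ m2))
      (I.mul_mem_left _ m1)
  have k1 : (X 1 * X 1 ^ 2 : MvPolynomial (Fin 4) ℂ) ∈ I := by
    have e : (X 1 * X 1 ^ 2 : MvPolynomial (Fin 4) ℂ)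
        = X 1 * f3 - X 3 * f3 + X 1 * f1 := by
      rw [hf1, hf3]; ring
    rw [e]
    exact add_mem (sub_mem (I.mul_mem_left _ m3) (I.mul_mem_left _ m3))
      (I.mul_mem_left _ m1)
  have k2 : (X 2 * X 1 ^ 2 : MvPolynomial (Fin 4) ℂ) ∈ I := by
    have e : (X 2 * X 1 ^ 2 : MvPolynomial (Fin 4) ℂ)
        = X 2 * f3 - X 3 * f2 + X 0 * f1 := by
      rw [hf1, hf2, hf3]; ring
    rw [e]
    exact add_mem (sub_mem (I.mul_mem_left _ m3) (I.mul_mem_left _ m2))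
      (I.mul_mem_left _ m1)
  have k3 : (X 3 * X 1 ^ 2 : MvPolynomial (Fin 4) ℂ) ∈ I := by
    have e : (X 3 * X 1 ^ 2 : MvPolynomial (Fin 4) ℂ)
        = X 3 * f3 - X 1 * f1 := by
      rw [hf1, hf3]; ring
    rw [e]
    exact sub_mem (I.mul_mem_left _ m3) (I.mul_mem_left _ m1)
  have key : ∀ j : Fin 4, (X j * X 1 ^ 2 : MvPolynomial (Fin 4) ℂ) ∈ I := by
    intro j
    fin_cases j
    · exact k0
    · exact k1
    · exact k2
    · exact k3
  refine ⟨?_, key, ?_⟩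
  · intro hg
    have h0 : ∀ p ∈ ({f1, f2, f3} : Set (MvPolynomial (Fin 4) ℂ)),
        (aeval vv) p = 0 := by
      rintro p (rfl | rfl | rfl)
      · rw [hf1]
        simp only [map_pow, aeval_X]
        show vv 3 ^ 2 = 0
        simp only [vv, Matrix.cons_val_three, Matrix.cons_val_two, Matrix.tail_cons,
          Matrix.head_cons]
        rw [sq, xx_sq]
      · rw [hf2]
        simp only [map_add, map_mul, aeval_X]
        show vv 1 * vv 2 + vv 0 * vv 3 = 0
        simp [vv]
      · rw [hf3]
        simp only [map_add, map_mul, map_pow, aeval_X]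
        show vv 1 ^ 2 + vv 1 * vv 3 = 0
        simp only [vv, Matrix.cons_val_one, Matrix.head_cons, Matrix.cons_val_three,
          Matrix.cons_val_two, Matrix.tail_cons, Matrix.cons_val_zero]
        set c : Rr := algebraMap ℂ Rr (1/2) with hc
        have h2c : c + c = 1 := by
          rw [hc, ← map_add]; norm_num
        have e : (yy - c * xx) ^ 2 + (yy - c * xx) * xx
            = yy*yy + (1 - (c + c))*(xx*yy) + (c*c - c)*(xx*xx) := by ring
        rw [e, h2c, xx_sq, yy_sq]
        ring
    have hz : (aeval vv) (X 1 ^ 2 : MvPolynomial (Fin 4) ℂ) = 0 := by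
      refine Submodule.span_induction h0 (by simp) ?_ ?_ hg
      · intro a b _ _ ha hb; rw [map_add, ha, hb, add_zero]
      · intro a b _ hb; rw [smul_eq_mul, map_mul, hb, mul_zero]
    have hv : (yy - algebraMap ℂ Rr (1/2) * xx) ^ 2 = 0 := by
      rw [map_pow, aeval_X] at hz
      simpa only [vv, Matrix.cons_val_one, Matrix.head_cons, Matrix.cons_val_zero] using hz
    set c : Rr := algebraMap ℂ Rr (1/2) with hc
    have h2c : c + c = 1 := by rw [hc, ← map_add]; norm_num
    have e2 : (yy - c * xx) ^ 2
        = yy*yy - (c + c)*(xx*yy) + (c*c)*(xx*xx) := by ring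
    rw [e2, h2c, xx_sq, yy_sq] at hv
    simp at hv
    exact xy_ne hv
  · rw [Submodule.mem_colon]
    intro p hp
    refine Submodule.span_induction ?_ (by simp) ?_ ?_ hp
    · rintro _ ⟨j, rfl⟩
      simpa [smul_eq_mul, mul_comm] using key j
    · intro a b _ _ ha hb
      simpa [smul_add, mul_add] using add_mem ha hb
    · intro r a _ ha
      rw [smul_comm]
      exact Submodule.smul_mem _ _ ha
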